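/- Let R be a DVR with uniformizer π and residue field k, and let L be a maximal integral lattice in a K-vector space V with nondegenerate symmetric form. Then the form on M = L*/L given by (x₁ + L, x₂ + L) ↦ image in k of π⟨x₁, x₂⟩ is a well-defined nondegenerate k-bilinear form on M. -/

import Mathlib

/-- `v` lies in the dual lattice `L* = {v : ⟨L, v⟩ ⊆ R}`. -/
def InDual (R : Type*) [CommRing R] (K : Type*) [Field K] [Algebra R K]
    (V : Type*) [AddCommGroup V] [Module K V]
    (B : LinearMap.BilinForm K V) (L : Set V) (v : V) : Prop :=
  ∀ l ∈ L, ∃ r : R, algebraMap R K r = B l v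

/-- For a maximal integral lattice `L` with dual `L*`, the assignment
`(x₁ + L, x₂ + L) ↦ π⟨x₁, x₂⟩ mod π` is a well-defined nondegenerate
`k`-bilinear form on `M = L*/L`, where `k = R/(π)`. -/
theorem stmt16 (R : Type*) [CommRing R] [IsDomain R] [IsDiscreteValuationRing R]
    (π : R) (hπ : Irreducible π)
    (K : Type*) [Field K] [Algebra R K] [IsFractionRing R K]
    (V : Type*) [AddCommGroup V] [Module K V] [FiniteDimensional K V]
    [Module R V] [IsScalarTower R K V]
    (B : LinearMap.BilinForm K V) (hB : B.Nondegenerate)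
    (hsymm : ∀ v w : V, B v w = B w v)
    (L : Submodule R V) (hfg : L.FG)
    (hfull : Submodule.span K (L : Set V) = ⊤)
    (hint : ∀ x ∈ L, ∀ y ∈ L, ∃ r : R, algebraMap R K r = B x y)
    (hmax : ∀ L' : Submodule R V, L'.FG → Submodule.span K (L' : Set V) = ⊤ →
      (∀ x ∈ L', ∀ y ∈ L', ∃ r : R, algebraMap R K r = B x y) → L ≤ L' → L' = L) :
    ∃ Bm : V → V → R ⧸ Ideal.span {π},
      -- the form computes `π⟨x₁, x₂⟩` reduced mod `π`
      (∀ x y : V, InDual R K V B L x → InDual R K V B L y →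
        ∀ r : R, algebraMap R K r = algebraMap R K π * B x y →
          Bm x y = Ideal.Quotient.mk (Ideal.span {π}) r) ∧
      -- it is well defined on `L*/L`
      (∀ x x' y : V, InDual R K V B L x → InDual R K V B L x' → InDual R K V B L y →
        x - x' ∈ L → Bm x y = Bm x' y) ∧
      (∀ x y y' : V, InDual R K V B L x → InDual R K V B L y → InDual R K V B L y' →
        y - y' ∈ L → Bm x y = Bm x y') ∧
      -- it is `k`-bilinear (symmetric case: additive and `R`-homogeneous in each slot)
      (∀ x x' y : V, InDual R K V B L x → InDual R K V B L x' → InDual R K V B L y →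
        Bm (x + x') y = Bm x y + Bm x' y) ∧
      (∀ (c : R) (x y : V), InDual R K V B L x → InDual R K V B L y →
        Bm (c • x) y = Ideal.Quotient.mk (Ideal.span {π}) c * Bm x y) ∧
      (∀ x y y' : V, InDual R K V B L x → InDual R K V B L y → InDual R K V B L y' →
        Bm x (y + y') = Bm x y + Bm x y') ∧
      (∀ (c : R) (x y : V), InDual R K V B L x → InDual R K V B L y →
        Bm x (c • y) = Ideal.Quotient.mk (Ideal.span {π}) c * Bm x y) ∧
      -- it is nondegenerate on `L*/L`
      (∀ x : V, InDual R K V B L x →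
        (∀ y : V, InDual R K V B L y → Bm x y = 0) → x ∈ L) := by
  classical
  have hinj : Function.Injective (algebraMap R K) := IsFractionRing.injective R K
  have hsmul : ∀ (r : R) (v : V), r • v = algebraMap R K r • v :=
    fun r v => (algebraMap_smul K r v).symm
  -- Lemma A : if `x ∈ L*` and `B x x ∈ R` then `x ∈ L`, by maximality of `L`.
  have lemA : ∀ x : V, InDual R K V B L x → (∃ r : R, algebraMap R K r = B x x) → x ∈ L := by
    rintro x hx ⟨rxx, hrxx⟩
    have hx' : ∀ l ∈ L, ∃ r : R, algebraMap R K r = B x l := by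
      intro l hl
      obtain ⟨r, hr⟩ := hx l hl
      exact ⟨r, by rw [hr, hsymm]⟩
    have hsub : L ≤ L ⊔ Submodule.span R {x} := le_sup_left
    have hxL' : x ∈ L ⊔ Submodule.span R {x} :=
      (le_sup_right : Submodule.span R {x} ≤ _) (Submodule.mem_span_singleton_self x)
    have hmaxed := hmax (L ⊔ Submodule.span R {x})
      (hfg.sup (Submodule.fg_span_singleton x))
      (by rw [eq_top_iff, ← hfull]; exact Submodule.span_mono hsub) ?_ hsub
    · rw [← hmaxed]; exact hxL'
    · intro a ha b hb
      rw [Submodule.mem_sup] at ha hb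
      obtain ⟨l, hl, s, hs, rfl⟩ := ha
      obtain ⟨l', hl', s', hs', rfl⟩ := hb
      rw [Submodule.mem_span_singleton] at hs hs'
      obtain ⟨r, rfl⟩ := hs
      obtain ⟨r', rfl⟩ := hs'
      obtain ⟨a1, ha1⟩ := hint l hl l' hl'
      obtain ⟨a2, ha2⟩ := hx l hl
      obtain ⟨a3, ha3⟩ := hx' l' hl'
      refine ⟨a1 + r' * a2 + r * a3 + r * r' * rxx, ?_⟩
      rw [hsmul r x, hsmul r' x]
      simp only [map_add, map_smul, LinearMap.add_apply, LinearMap.smul_apply,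
        smul_eq_mul, map_mul]
      rw [ha1, ha2, ha3, hrxx]
      ring
  -- Lemma B : for `x ∈ L*` we have `π • B x x ∈ R`.
  have lemB : ∀ x : V, InDual R K V B L x →
      ∃ r : R, algebraMap R K r = algebraMap R K π * B x x := by
    intro x hx
    have hex : ∃ n : ℕ, ∃ r : R, algebraMap R K r = algebraMap R K (π ^ n) * B x x := by
      obtain ⟨⟨a, b⟩, hab⟩ := IsLocalization.surj (nonZeroDivisors R) (B x x)
      have hb0 : (b : R) ≠ 0 := nonZeroDivisors.coe_ne_zero b
      obtain ⟨n, u, hu⟩ := IsDiscreteValuationRing.associated_pow_irreducible hb0 hπ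
      refine ⟨n, (u : R) * a, ?_⟩
      have hab' : B x x * algebraMap R K (b : R) = algebraMap R K a := hab
      have : (π : R) ^ n = b * u := hu.symm
      rw [this, map_mul, map_mul, ← hab']
      ring
    have hn1 : Nat.find hex ≤ 1 := by
      by_contra hn1
      push_neg at hn1
      set n := Nat.find hex with hn
      have hPn := Nat.find_spec hex
      set m := (n + 1) / 2 with hm
      have hm1 : m < n := by omega
      have hm2 : n ≤ 2 * m := by omega
      set y := (π ^ m : R) • x with hy
      have hyd : InDual R K V B L y := by
        intro l hl
        obtain ⟨r, hr⟩ := hx l hl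
        exact ⟨π ^ m * r, by rw [hy, hsmul, map_smul, smul_eq_mul, map_mul, hr]⟩
      have hyy : ∃ r : R, algebraMap R K r = B y y := by
        obtain ⟨r, hr⟩ := hPn
        refine ⟨π ^ (2 * m - n) * r, ?_⟩
        rw [hy, hsmul]
        simp only [map_smul, LinearMap.smul_apply, smul_eq_mul]
        have hexp : 2 * m - n + n = m + m := by omega
        rw [map_mul, hr, ← mul_assoc, ← mul_assoc, ← map_mul, ← map_mul,
          ← pow_add, ← pow_add, hexp]
      have hyL : y ∈ L := lemA y hyd hyy
      obtain ⟨r, hr⟩ := hx y hyL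
      exact Nat.find_min hex hm1
        ⟨r, by rw [hr, hy, hsmul, map_smul, LinearMap.smul_apply, smul_eq_mul]⟩
    obtain ⟨r, hr⟩ := Nat.find_spec hex
    refine ⟨π ^ (1 - Nat.find hex) * r, ?_⟩
    have hexp : 1 - Nat.find hex + Nat.find hex = 1 := by omega
    rw [map_mul, hr, ← mul_assoc, ← map_mul, ← pow_add, hexp, pow_one]
  -- Lemma C : for `x ∈ L*` we have `π • x ∈ L`.
  have lemC : ∀ x : V, InDual R K V B L x → (π : R) • x ∈ L := by
    intro x hx
    obtain ⟨s, hs⟩ := lemB x hx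
    refine lemA ((π : R) • x) ?_ ⟨π * s, ?_⟩
    · intro l hl
      obtain ⟨r, hr⟩ := hx l hl
      exact ⟨π * r, by rw [hsmul, map_smul, smul_eq_mul, map_mul, hr]⟩
    · rw [hsmul]
      simp only [map_smul, LinearMap.smul_apply, smul_eq_mul]
      rw [map_mul, hs]
  -- Lemma D : for `x, y ∈ L*` we have `π • B x y ∈ R`.
  have lemD : ∀ x y : V, InDual R K V B L x → InDual R K V B L y →
      ∃ r : R, algebraMap R K r = algebraMap R K π * B x y := by
    intro x y hx hy
    obtain ⟨r, hr⟩ := hy ((π : R) • x) (lemC x hx)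
    exact ⟨r, by rw [hr, hsmul, map_smul, LinearMap.smul_apply, smul_eq_mul]⟩
  set Bm : V → V → R ⧸ Ideal.span {π} := fun x y =>
    if h : InDual R K V B L x ∧ InDual R K V B L y then
      Ideal.Quotient.mk (Ideal.span {π}) (Classical.choose (lemD x y h.1 h.2))
    else 0 with hBmdef
  have key : ∀ x y : V, InDual R K V B L x → InDual R K V B L y →
      ∀ r : R, algebraMap R K r = algebraMap R K π * B x y →
        Bm x y = Ideal.Quotient.mk (Ideal.span {π}) r := by
    intro x y hx hy r hr
    rw [hBmdef]
    dsimp only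
    rw [dif_pos ⟨hx, hy⟩]
    congr 1
    exact hinj ((Classical.choose_spec (lemD x y hx hy)).trans hr.symm)
  -- closure properties of the dual
  have dadd : ∀ x x' : V, InDual R K V B L x → InDual R K V B L x' →
      InDual R K V B L (x + x') := by
    intro x x' hx hx' l hl
    obtain ⟨r, hr⟩ := hx l hl
    obtain ⟨r', hr'⟩ := hx' l hl
    exact ⟨r + r', by rw [map_add, hr, hr', map_add]⟩
  have dsmul : ∀ (c : R) (x : V), InDual R K V B L x → InDual R K V B L (c • x) := by
    intro c x hx l hl
    obtain ⟨r, hr⟩ := hx l hl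
    exact ⟨c * r, by rw [hsmul, map_smul, smul_eq_mul, map_mul, hr]⟩
  refine ⟨Bm, key, ?_, ?_, ?_, ?_, ?_, ?_, ?_⟩
  · -- well defined in the first slot
    intro x x' y hx hx' hy hxx'
    obtain ⟨r, hr⟩ := lemD x y hx hy
    obtain ⟨r', hr'⟩ := lemD x' y hx' hy
    obtain ⟨s, hs⟩ := hy (x - x') hxx'
    rw [key x y hx hy r hr, key x' y hx' hy r' hr', Ideal.Quotient.eq]
    have : r - r' = π * s := by
      apply hinj
      rw [map_sub, hr, hr', map_mul, hs, map_sub, LinearMap.sub_apply, mul_sub]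
    rw [this]
    exact Ideal.mem_span_singleton.2 (dvd_mul_right π s)
  · -- well defined in the second slot
    intro x y y' hx hy hy' hyy'
    obtain ⟨r, hr⟩ := lemD x y hx hy
    obtain ⟨r', hr'⟩ := lemD x y' hx hy'
    obtain ⟨s, hs⟩ := hx (y - y') hyy'
    rw [key x y hx hy r hr, key x y' hx hy' r' hr', Ideal.Quotient.eq]
    have : r - r' = π * s := by
      apply hinj
      rw [map_sub, hr, hr', map_mul, hs, hsymm (y - y') x, map_sub, mul_sub]
    rw [this]
    exact Ideal.mem_span_singleton.2 (dvd_mul_right π s)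
  · -- additive in the first slot
    intro x x' y hx hx' hy
    obtain ⟨r, hr⟩ := lemD x y hx hy
    obtain ⟨r', hr'⟩ := lemD x' y hx' hy
    rw [key x y hx hy r hr, key x' y hx' hy r' hr',
      key (x + x') y (dadd x x' hx hx') hy (r + r')
        (by rw [map_add, hr, hr', map_add, LinearMap.add_apply, mul_add]),
      map_add]
  · -- R-homogeneous in the first slot
    intro c x y hx hy
    obtain ⟨r, hr⟩ := lemD x y hx hy
    rw [key x y hx hy r hr,
      key (c • x) y (dsmul c x hx) hy (c * r)
        (by rw [map_mul, hr, hsmul, map_smul, LinearMap.smul_apply, smul_eq_mul]; ring),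
      map_mul]
  · -- additive in the second slot
    intro x y y' hx hy hy'
    obtain ⟨r, hr⟩ := lemD x y hx hy
    obtain ⟨r', hr'⟩ := lemD x y' hx hy'
    rw [key x y hx hy r hr, key x y' hx hy' r' hr',
      key x (y + y') hx (dadd y y' hy hy') (r + r')
        (by rw [map_add, hr, hr', map_add, mul_add]),
      map_add]
  · -- R-homogeneous in the second slot
    intro c x y hx hy
    obtain ⟨r, hr⟩ := lemD x y hx hy
    rw [key x y hx hy r hr,
      key x (c • y) hx (dsmul c y hy) (c * r)
        (by rw [map_mul, hr, hsmul, map_smul, smul_eq_mul]; ring),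
      map_mul]
  · -- nondegeneracy
    intro x hx h
    obtain ⟨r, hr⟩ := lemD x x hx hx
    have h0 : Ideal.Quotient.mk (Ideal.span {π}) r = 0 := by
      rw [← key x x hx hx r hr]; exact h x hx
    obtain ⟨s, rfl⟩ := Ideal.mem_span_singleton.1 (Ideal.Quotient.eq_zero_iff_mem.1 h0)
    refine lemA x hx ⟨s, ?_⟩
    have hπ0 : algebraMap R K π ≠ 0 := fun h' => hπ.ne_zero (hinj (h'.trans (map_zero _).symm))
    have := hr
    rw [map_mul] at this
    exact mul_left_cancel₀ hπ0 this
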